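/- Let Z = (Z_{ia,jb}) be a magic unitary of size np over a unital C*-algebra, indexed by [1,p]×[1,n], and suppose that for all L, J ∈ [1,n] the element P_L^J := Σ_{s=1}^p Z_{sL,kJ} is independent of k ∈ [1,p]. Then the n×n matrix P = (P_L^J) is itself a magic unitary: its entries are projections, distinct entries in a row or column are orthogonal, and rows and columns sum to 1. -/

import Mathlib

/-- A magic unitary over a unital C*-algebra: a square matrix all of whose entries are
projections, with each row and each column summing to `1`. -/
def IsMagicUnitary {ι A : Type*} [Fintype ι] [Ring A] [StarRing A]
    (u : Matrix ι ι A) : Prop :=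
  (∀ i j, IsIdempotentElem (u i j) ∧ star (u i j) = u i j) ∧
    (∀ i, ∑ j, u i j = 1) ∧ (∀ j, ∑ i, u i j = 1)

lemma proj_sum_one_orthogonal {ι A : Type*} [Fintype ι] [CStarAlgebra A]
    (e : ι → A) (hproj : ∀ i, IsIdempotentElem (e i) ∧ star (e i) = e i)
    (hsum : ∑ i, e i = 1) {i j : ι} (hij : i ≠ j) : e i * e j = 0 := by
  classical
  letI : PartialOrder A := CStarAlgebra.spectralOrder A
  letI : StarOrderedRing A := CStarAlgebra.spectralOrderedRing A
  have h1 : ∑ k, e j * e k * e j = e j := by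
    rw [← Finset.sum_mul, ← Finset.mul_sum, hsum, mul_one]
    exact (hproj j).1
  have h2 : ∑ k ∈ Finset.univ.erase j, e j * e k * e j = 0 := by
    have h := Finset.add_sum_erase Finset.univ (fun k => e j * e k * e j) (Finset.mem_univ j)
    rw [h1] at h
    have hjj : e j * e j * e j = e j := by
      rw [(hproj j).1]; exact (hproj j).1
    rw [hjj] at h
    exact add_eq_left.mp h
  have hnn : ∀ k ∈ Finset.univ.erase j, 0 ≤ e j * e k * e j := by
    intro k _
    have h : e j * e k * e j = star (e k * e j) * (e k * e j) := by
      rw [star_mul, (hproj k).2, (hproj j).2,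
        show e j * e k * (e k * e j) = e j * (e k * e k) * e j by noncomm_ring,
        (hproj k).1]
    rw [h]
    exact star_mul_self_nonneg _
  have hzero : ∀ k ∈ Finset.univ.erase j, e j * e k * e j = 0 :=
    (Finset.sum_eq_zero_iff_of_nonneg hnn).mp h2
  have hi : e j * e i * e j = 0 := hzero i (Finset.mem_erase.mpr ⟨hij, Finset.mem_univ i⟩)
  have h3 : star (e i * e j) * (e i * e j) = 0 := by
    rw [star_mul, (hproj i).2, (hproj j).2,
      show e j * e i * (e i * e j) = e j * (e i * e i) * e j by noncomm_ring, (hproj i).1, hi]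
  exact (CStarRing.star_mul_self_eq_zero_iff _).mp h3

/-- Let `Z` be a magic unitary of size `np` indexed by `[1,p]×[1,n]`,
such that `P_L^J := Σ_s Z_{sL,kJ}` is independent of `k`. Then the `n×n` matrix
`P = (P_L^J)` is itself a magic unitary: entries are projections, distinct entries in a
row or column are orthogonal, and rows and columns sum to `1`. -/
theorem P_matrix_is_magic_unitary {p n : ℕ} {A : Type*} [CStarAlgebra A]
    (Z : Matrix (Fin p × Fin n) (Fin p × Fin n) A) (hZ : IsMagicUnitary Z)
    (hindep : ∀ (L J : Fin n) (k₁ k₂ : Fin p),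
      ∑ s, Z (s, L) (k₁, J) = ∑ s, Z (s, L) (k₂, J))
    (k₀ : Fin p) :
    IsMagicUnitary (Matrix.of fun L J : Fin n => ∑ s, Z (s, L) (k₀, J)) ∧
    (∀ L J J' : Fin n, J ≠ J' →
      (∑ s, Z (s, L) (k₀, J)) * (∑ s, Z (s, L) (k₀, J')) = 0) ∧
    (∀ L L' J : Fin n, L ≠ L' →
      (∑ s, Z (s, L) (k₀, J)) * (∑ s, Z (s, L') (k₀, J)) = 0) := by
  obtain ⟨hZproj, hZrow, hZcol⟩ := hZ
  set P : Fin n → Fin n → A := fun L J => ∑ s, Z (s, L) (k₀, J) with hP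
  -- orthogonality of entries of Z in a fixed column
  have hZorth : ∀ (c : Fin p × Fin n) {q q' : Fin p × Fin n}, q ≠ q' →
      Z q c * Z q' c = 0 := fun c q q' hqq' =>
    proj_sum_one_orthogonal (fun r => Z r c) (fun r => hZproj r c) (hZcol c) hqq'
  -- entries of P are projections
  have hproj : ∀ L J, IsIdempotentElem (P L J) ∧ star (P L J) = P L J := by
    intro L J
    constructor
    · show P L J * P L J = P L J
      rw [hP]
      simp only
      rw [Finset.sum_mul_sum]
      apply Finset.sum_congr rfl
      intro s _
      rw [Finset.sum_eq_single s]
      · exact (hZproj (s, L) (k₀, J)).1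
      · intro t _ hts
        exact hZorth (k₀, J)
          (by intro h; exact hts (congrArg Prod.fst h).symm :
            ((s, L) : Fin p × Fin n) ≠ (t, L))
      · intro h; exact absurd (Finset.mem_univ s) h
    · rw [hP]
      simp only [star_sum]
      exact Finset.sum_congr rfl fun s _ => (hZproj (s, L) (k₀, J)).2
  -- column sums of P equal 1
  have hcolP : ∀ J, ∑ L, P L J = 1 := by
    intro J
    rw [hP]
    simp only
    rw [Finset.sum_comm]
    calc ∑ s, ∑ L, Z (s, L) (k₀, J) = ∑ q : Fin p × Fin n, Z q (k₀, J) := by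
          rw [Fintype.sum_prod_type]
      _ = 1 := hZcol (k₀, J)
  -- row sums of P equal 1
  have hp0 : (p : ℂ) ≠ 0 := Nat.cast_ne_zero.mpr k₀.pos.ne'
  have hrowP : ∀ L, ∑ J, P L J = 1 := by
    intro L
    have key : p • (∑ J, P L J) = p • (1 : A) := by
      calc p • (∑ J, P L J) = ∑ k : Fin p, ∑ J, P L J := by
            rw [Finset.sum_const, Finset.card_univ, Fintype.card_fin]
        _ = ∑ k : Fin p, ∑ J, ∑ s, Z (s, L) (k, J) := by
            apply Finset.sum_congr rfl
            intro k _
            exact Finset.sum_congr rfl fun J _ => hindep L J k₀ k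
        _ = ∑ k : Fin p, ∑ s, ∑ J, Z (s, L) (k, J) :=
            Finset.sum_congr rfl fun k _ => Finset.sum_comm
        _ = ∑ s, ∑ k : Fin p, ∑ J, Z (s, L) (k, J) := Finset.sum_comm
        _ = ∑ s : Fin p, (1 : A) := by
            apply Finset.sum_congr rfl
            intro s _
            calc ∑ k : Fin p, ∑ J, Z (s, L) (k, J)
                = ∑ q : Fin p × Fin n, Z (s, L) q := by rw [Fintype.sum_prod_type]
              _ = 1 := hZrow (s, L)
        _ = p • (1 : A) := by
            rw [Finset.sum_const, Finset.card_univ, Fintype.card_fin]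
    have key' : (p : ℂ) • (∑ J, P L J) = (p : ℂ) • (1 : A) := by
      rw [Nat.cast_smul_eq_nsmul, Nat.cast_smul_eq_nsmul]
      exact key
    exact smul_right_injective A hp0 key'
  refine ⟨⟨fun L J => hproj L J, hrowP, hcolP⟩, ?_, ?_⟩
  · intro L J J' hJJ'
    exact proj_sum_one_orthogonal (fun J => P L J) (fun J => hproj L J) (hrowP L) hJJ'
  · intro L L' J hLL'
    exact proj_sum_one_orthogonal (fun L => P L J) (fun L => hproj L J) (hcolP J) hLL'
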